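/- Let X be a finite set of observations with |X| ≥ 3. Then the band distance D is a distance metric on X: for all x, y, z ∈ X, (i) D_{xy} ≥ 0; (ii) D_{xy} = 0 if and only if x = y; (iii) D_{xy} = D_{yx}; and (iv) D_{xz} ≤ D_{xy} + D_{yz}. -/

import Mathlib

open Finset
open scoped Classical

/-- The set of times at which observation `x` lies within the band determined by the
unordered pair `s` of observations: times `t` with `b_ℓ(t) ≤ x t ≤ b_u(t)`. -/
noncomputable def timesInS {T : Type*} [Fintype T] (s : Sym2 (T → ℝ)) (x : T → ℝ) : Finset T :=
  Finset.univ.filter (fun t =>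
    Sym2.lift ⟨fun v w => min (v t) (w t), fun v w => min_comm (v t) (w t)⟩ s ≤ x t ∧
    x t ≤ Sym2.lift ⟨fun v w => max (v t) (w t), fun v w => max_comm (v t) (w t)⟩ s)

/-- The set of bands of a dataset `X`: one band for each unordered pair of distinct
observations in `X`. -/
noncomputable def bands {T : Type*} [Fintype T] (X : Finset (T → ℝ)) : Finset (Sym2 (T → ℝ)) :=
  X.sym2.filter (fun s => ¬ s.IsDiag)

/-- Bandwise (Jaccard) similarity of `x` and `y` with respect to the band `s`. -/
noncomputable def bandSimS {T : Type*} [Fintype T] (s : Sym2 (T → ℝ)) (x y : T → ℝ) : ℝ :=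
  if timesInS s x ∪ timesInS s y = ∅ then 1
  else ((timesInS s x ∩ timesInS s y).card : ℝ) / ((timesInS s x ∪ timesInS s y).card : ℝ)

/-- Bandwise (Jaccard) distance of `x` and `y` with respect to the band `s`. -/
noncomputable def bandDistS {T : Type*} [Fintype T] (s : Sym2 (T → ℝ)) (x y : T → ℝ) : ℝ :=
  1 - bandSimS s x y

/-- `B_{xy}`: the set of bands of `X` containing `x` or `y` at some time. -/
noncomputable def Bxy {T : Type*} [Fintype T] (X : Finset (T → ℝ)) (x y : T → ℝ) :
    Finset (Sym2 (T → ℝ)) :=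
  (bands X).filter (fun s => timesInS s x ∪ timesInS s y ≠ ∅)

/-- The band distance `D_{xy}`: the average bandwise distance over all bands in `B_{xy}`. -/
noncomputable def bandD {T : Type*} [Fintype T] (X : Finset (T → ℝ)) (x y : T → ℝ) : ℝ :=
  (1 / ((Bxy X x y).card : ℝ)) * ∑ s ∈ Bxy X x y, bandDistS s x y

/-! ### Auxiliary lemmas -/

lemma bandDistS_eq {T : Type*} [Fintype T] (s : Sym2 (T → ℝ)) (x y : T → ℝ) :
    bandDistS s x y =
      ((symmDiff (timesInS s x) (timesInS s y)).card : ℝ) /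
        ((timesInS s x ∪ timesInS s y).card : ℝ) := by
  set A := timesInS s x
  set B := timesInS s y
  unfold bandDistS bandSimS
  by_cases h : A ∪ B = ∅
  · rcases Finset.union_eq_empty.mp h with ⟨hA, hB⟩
    simp [h, hA, hB, show timesInS s x = ∅ from hA, show timesInS s y = ∅ from hB]
  · have hle : (A ∩ B).card ≤ (A ∪ B).card :=
      Finset.card_le_card (Finset.inter_subset_union)
    have hu : (0:ℝ) < ((A ∪ B).card : ℝ) := by
      have := Finset.card_pos.mpr (Finset.nonempty_of_ne_empty h)
      exact_mod_cast this
    rw [if_neg h, symmDiff_eq_sup_sdiff_inf]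
    rw [show (A ⊔ B) = A ∪ B from rfl, show (A ⊓ B) = A ∩ B from rfl]
    rw [Finset.card_sdiff_of_subset (Finset.inter_subset_union), Nat.cast_sub hle, sub_div,
      div_self hu.ne']

lemma bandDistS_nonneg {T : Type*} [Fintype T] (s : Sym2 (T → ℝ)) (x y : T → ℝ) :
    0 ≤ bandDistS s x y := by
  rw [bandDistS_eq]; positivity

lemma bandDistS_le_one {T : Type*} [Fintype T] (s : Sym2 (T → ℝ)) (x y : T → ℝ) :
    bandDistS s x y ≤ 1 := by
  rw [bandDistS_eq]
  apply div_le_one_of_le₀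
  · exact_mod_cast Finset.card_le_card (by
      intro t ht
      rw [Finset.mem_symmDiff] at ht
      rw [Finset.mem_union]
      tauto)
  · positivity

lemma bandDistS_symm {T : Type*} [Fintype T] (s : Sym2 (T → ℝ)) (x y : T → ℝ) :
    bandDistS s x y = bandDistS s y x := by
  unfold bandDistS bandSimS
  rw [Finset.union_comm, Finset.inter_comm]

/-- The key arithmetic inequality. -/
lemma tri_core (d u dab uab dbc ubc m : ℝ) (hu : 0 < u)
    (hdab : 0 ≤ dab) (hdbc : 0 ≤ dbc) (hm : 0 ≤ m)
    (hdu : d ≤ u) (h3 : dab ≤ uab) (h4 : dbc ≤ ubc)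
    (h5 : d + 2*m ≤ dab + dbc) (h6 : uab ≤ u + m) (h7 : ubc ≤ u + m) :
    d/u ≤ dab/uab + dbc/ubc := by
  have hum : 0 < u + m := by linarith
  have ha : dab/(u+m) ≤ dab/uab := by
    rcases eq_or_lt_of_le (hdab.trans h3) with h|h
    · have h0 : dab = 0 := le_antisymm (h3.trans h.symm.le) hdab
      simp [h0, ← h]
    · gcongr
  have hb : dbc/(u+m) ≤ dbc/ubc := by
    rcases eq_or_lt_of_le (hdbc.trans h4) with h|h
    · have h0 : dbc = 0 := le_antisymm (h4.trans h.symm.le) hdbc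
      simp [h0, ← h]
    · gcongr
  calc d/u ≤ (d + 2*m)/(u + m) := by
        rw [div_le_div_iff₀ hu hum]; nlinarith
    _ ≤ (dab + dbc)/(u + m) := by gcongr
    _ = dab/(u+m) + dbc/(u+m) := add_div _ _ _
    _ ≤ dab/uab + dbc/ubc := add_le_add ha hb

/-- Jaccard triangle inequality, bandwise. -/
lemma bandDistS_triangle {T : Type*} [Fintype T] (s : Sym2 (T → ℝ)) (x y z : T → ℝ) :
    bandDistS s x z ≤ bandDistS s x y + bandDistS s y z := by
  set A := timesInS s x
  set B := timesInS s y
  set C := timesInS s z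
  by_cases hAC : A ∪ C = ∅
  · have h0 : bandDistS s x z = 0 := by
      unfold bandDistS bandSimS
      simp [show timesInS s x = ∅ from (Finset.union_eq_empty.mp hAC).1, show timesInS s z = ∅ from (Finset.union_eq_empty.mp hAC).2]
    rw [h0]
    exact add_nonneg (bandDistS_nonneg s x y) (bandDistS_nonneg s y z)
  rw [bandDistS_eq, bandDistS_eq, bandDistS_eq]
  set M := B \ (A ∪ C) with hM
  have hMAB : M ⊆ symmDiff A B := by
    intro t ht
    rw [Finset.mem_sdiff, Finset.mem_union] at ht
    rw [Finset.mem_symmDiff]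
    tauto
  have hMBC : M ⊆ symmDiff B C := by
    intro t ht
    rw [Finset.mem_sdiff, Finset.mem_union] at ht
    rw [Finset.mem_symmDiff]
    tauto
  have hMdisj : Disjoint (symmDiff A C) M := by
    rw [Finset.disjoint_left]
    intro t ht hm
    rw [Finset.mem_symmDiff] at ht
    rw [Finset.mem_sdiff, Finset.mem_union] at hm
    tauto
  -- card bounds
  have hcard1 : (symmDiff A C ∩ symmDiff A B).card + M.card ≤ (symmDiff A B).card := by
    rw [← Finset.card_union_of_disjoint (hMdisj.mono_left Finset.inter_subset_left)]
    apply Finset.card_le_card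
    apply Finset.union_subset Finset.inter_subset_right hMAB
  have hsd2 : (symmDiff A C \ symmDiff A B) ⊆ symmDiff B C := by
    intro t ht
    rw [Finset.mem_sdiff, Finset.mem_symmDiff, Finset.mem_symmDiff] at ht
    rw [Finset.mem_symmDiff]
    tauto
  have hcard2 : (symmDiff A C \ symmDiff A B).card + M.card ≤ (symmDiff B C).card := by
    rw [← Finset.card_union_of_disjoint (hMdisj.mono_left (Finset.sdiff_subset))]
    apply Finset.card_le_card
    exact Finset.union_subset hsd2 hMBC
  have hsplit : (symmDiff A C ∩ symmDiff A B).card + (symmDiff A C \ symmDiff A B).card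
      = (symmDiff A C).card := Finset.card_inter_add_card_sdiff _ _
  have h5 : (symmDiff A C).card + 2 * M.card ≤ (symmDiff A B).card + (symmDiff B C).card := by
    omega
  have h6 : (A ∪ B).card ≤ (A ∪ C).card + M.card := by
    calc (A ∪ B).card ≤ ((A ∪ C) ∪ M).card := by
          apply Finset.card_le_card
          intro t ht
          rw [Finset.mem_union] at ht
          rw [Finset.mem_union, Finset.mem_union, Finset.mem_sdiff, Finset.mem_union]
          tauto
      _ ≤ (A ∪ C).card + M.card := Finset.card_union_le _ _
  have h7 : (B ∪ C).card ≤ (A ∪ C).card + M.card := by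
    calc (B ∪ C).card ≤ ((A ∪ C) ∪ M).card := by
          apply Finset.card_le_card
          intro t ht
          rw [Finset.mem_union] at ht
          rw [Finset.mem_union, Finset.mem_union, Finset.mem_sdiff, Finset.mem_union]
          tauto
      _ ≤ (A ∪ C).card + M.card := Finset.card_union_le _ _
  have hu : (0:ℝ) < ((A ∪ C).card : ℝ) := by
    have := Finset.card_pos.mpr (Finset.nonempty_of_ne_empty hAC)
    exact_mod_cast this
  apply tri_core _ _ _ _ _ _ (M.card : ℝ) hu (by positivity) (by positivity) (by positivity)
  · exact_mod_cast Finset.card_le_card (by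
      intro t ht
      rw [Finset.mem_symmDiff] at ht
      rw [Finset.mem_union]
      tauto)
  · exact_mod_cast Finset.card_le_card (by
      intro t ht
      rw [Finset.mem_symmDiff] at ht
      rw [Finset.mem_union]
      tauto)
  · exact_mod_cast Finset.card_le_card (by
      intro t ht
      rw [Finset.mem_symmDiff] at ht
      rw [Finset.mem_union]
      tauto)
  · push_cast; exact_mod_cast h5
  · exact_mod_cast h6
  · exact_mod_cast h7


lemma mem_Bxy_of_ne {T : Type*} [Fintype T] [Nonempty T] (X : Finset (T → ℝ)) (x y w : T → ℝ)
    (hx : x ∈ X) (hw : w ∈ X) (hxw : x ≠ w) :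
    s(x, w) ∈ Bxy X x y := by
  have hTx : timesInS s(x, w) x = Finset.univ := by ext t; simp [timesInS]
  simp only [Bxy, bands, Finset.mem_filter, Finset.mk_mem_sym2_iff]
  refine ⟨⟨⟨hx, hw⟩, by simp [Sym2.mk_isDiag_iff, hxw]⟩, ?_⟩
  rw [hTx]
  intro h
  exact Finset.univ_nonempty.ne_empty (Finset.union_eq_empty.mp h).1

/-- If a band's similarity term vanishes, the two time-sets coincide. -/
lemma timesIn_eq_of_dist_zero {T : Type*} [Fintype T] (s : Sym2 (T → ℝ)) (x y : T → ℝ)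
    (hU : timesInS s x ∪ timesInS s y ≠ ∅) (h : bandDistS s x y = 0) :
    timesInS s x = timesInS s y := by
  set A := timesInS s x
  set B := timesInS s y
  unfold bandDistS bandSimS at h
  rw [if_neg hU] at h
  have hu : (0:ℝ) < ((A ∪ B).card : ℝ) := by
    have := Finset.card_pos.mpr (Finset.nonempty_of_ne_empty hU)
    exact_mod_cast this
  have h1 : ((A ∩ B).card : ℝ) = ((A ∪ B).card : ℝ) := by
    rw [sub_eq_zero, eq_comm, div_eq_one_iff_eq hu.ne'] at h
    exact h
  have h2 : (A ∪ B).card ≤ (A ∩ B).card := by exact_mod_cast h1.ge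
  have h3 : A ∩ B = A ∪ B :=
    Finset.eq_of_subset_of_card_le Finset.inter_subset_union h2
  have hAB : A ⊆ B := by
    intro t ht
    have : t ∈ A ∪ B := Finset.mem_union_left _ ht
    rw [← h3] at this
    exact (Finset.mem_inter.mp this).2
  have hBA : B ⊆ A := by
    intro t ht
    have : t ∈ A ∪ B := Finset.mem_union_right _ ht
    rw [← h3] at this
    exact (Finset.mem_inter.mp this).1
  exact Finset.Subset.antisymm hAB hBA

lemma bandD_ne_zero {T : Type*} [Fintype T] [Nonempty T] (X : Finset (T → ℝ))
    (hX : 3 ≤ X.card) (x y : T → ℝ) (hx : x ∈ X) (hy : y ∈ X)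
    (t0 : T) (hlt : x t0 < y t0) : bandD X x y ≠ 0 := by
  -- get a third observation
  have h1 : 1 ≤ ((X.erase y).erase x).card := by
    have h2 := Finset.pred_card_le_card_erase (s := X) (a := y)
    have h3 := Finset.pred_card_le_card_erase (s := X.erase y) (a := x)
    omega
  obtain ⟨w, hw⟩ := Finset.card_pos.mp h1
  rw [Finset.mem_erase, Finset.mem_erase] at hw
  have hwx := hw.1
  have hwy := hw.2.1
  have hwX := hw.2.2
  have hs1 : s(x, w) ∈ Bxy X x y := mem_Bxy_of_ne X x y w hx hwX (Ne.symm hwx)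
  have hs2 : s(y, w) ∈ Bxy X x y := by
    have := mem_Bxy_of_ne X y x w hy hwX (Ne.symm hwy)
    simpa [Bxy, Finset.union_comm] using this
  intro h
  unfold bandD at h
  have hcard : (0:ℝ) < ((Bxy X x y).card : ℝ) := by
    have := Finset.card_pos.mpr ⟨_, hs1⟩
    exact_mod_cast this
  have hsum : ∑ s ∈ Bxy X x y, bandDistS s x y = 0 := by
    rcases mul_eq_zero.mp h with h' | h'
    · exfalso
      rw [one_div, inv_eq_zero] at h'
      exact hcard.ne' h'
    · exact h'
  have hall := (Finset.sum_eq_zero_iff_of_nonneg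
    (fun s _ => bandDistS_nonneg s x y)).mp hsum
  -- band s(x,w)
  have he1 : timesInS s(x, w) x = timesInS s(x, w) y :=
    timesIn_eq_of_dist_zero _ x y ((Finset.mem_filter.mp hs1).2) (hall _ hs1)
  have he2 : timesInS s(y, w) x = timesInS s(y, w) y :=
    timesIn_eq_of_dist_zero _ x y ((Finset.mem_filter.mp hs2).2) (hall _ hs2)
  have ht1 : t0 ∈ timesInS s(x, w) x := by simp [timesInS]
  have ht2 : t0 ∈ timesInS s(y, w) y := by simp [timesInS]
  rw [he1] at ht1
  rw [← he2] at ht2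
  rw [timesInS, Finset.mem_filter] at ht1 ht2
  have hyw : y t0 ≤ w t0 := by
    exact le_of_not_gt fun hc => absurd ht1.2.2 (not_le.mpr (max_lt hlt hc))
  have hwx' : w t0 ≤ x t0 := by
    exact le_of_not_gt fun hc => absurd ht2.2.1 (not_le.mpr (lt_min hlt hc))
  linarith

/-- The band distance `D` is a distance metric on a dataset `X` of at least three
observations: nonnegativity, identity of indiscernibles, symmetry, and the triangle
inequality. -/
theorem band_distance_is_metric {T : Type*} [Fintype T] [Nonempty T]
    (X : Finset (T → ℝ)) (hX : 3 ≤ X.card)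
    (x y z : T → ℝ) (hx : x ∈ X) (hy : y ∈ X) (hz : z ∈ X) :
    0 ≤ bandD X x y ∧
    (bandD X x y = 0 ↔ x = y) ∧
    bandD X x y = bandD X y x ∧
    bandD X x z ≤ bandD X x y + bandD X y z := by
  have nonneg : ∀ u v : T → ℝ, 0 ≤ bandD X u v := fun u v =>
    mul_nonneg (by positivity) (Finset.sum_nonneg fun s _ => bandDistS_nonneg s u v)
  have symm : ∀ u v : T → ℝ, bandD X u v = bandD X v u := by
    intro u v
    unfold bandD
    rw [show Bxy X u v = Bxy X v u by simp [Bxy, Finset.union_comm]]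
    congr 1
    exact Finset.sum_congr rfl fun s _ => bandDistS_symm s u v
  have hsum_le : ∀ (u v : T → ℝ) (S : Finset (Sym2 (T → ℝ))),
      ∑ s ∈ S, bandDistS s u v ≤ (S.card : ℝ) := by
    intro u v S
    calc ∑ s ∈ S, bandDistS s u v ≤ ∑ _s ∈ S, (1:ℝ) :=
          Finset.sum_le_sum fun s _ => bandDistS_le_one s u v
      _ = (S.card : ℝ) := by simp
  refine ⟨nonneg x y, ⟨?_, ?_⟩, symm x y, ?_⟩
  · -- bandD X x y = 0 → x = y
    intro h
    by_contra hne
    obtain ⟨t0, ht0⟩ : ∃ t0, x t0 ≠ y t0 := by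
      by_contra hc
      push_neg at hc
      exact hne (funext hc)
    rcases lt_or_gt_of_ne ht0 with hlt | hlt
    · exact bandD_ne_zero X hX x y hx hy t0 hlt h
    · exact bandD_ne_zero X hX y x hy hx t0 hlt ((symm x y) ▸ h)
  · -- x = y → bandD X x y = 0
    intro h
    subst h
    unfold bandD
    rw [Finset.sum_eq_zero, mul_zero]
    intro s _
    unfold bandDistS bandSimS
    by_cases hU : timesInS s x ∪ timesInS s x = ∅
    · simp [hU]
    · rw [if_neg hU, Finset.inter_self, Finset.union_self]
      have hu : (0:ℝ) < ((timesInS s x).card : ℝ) := by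
        rw [Finset.union_self] at hU
        have := Finset.card_pos.mpr (Finset.nonempty_of_ne_empty hU)
        exact_mod_cast this
      rw [div_self hu.ne', sub_self]
  · -- triangle inequality
    unfold bandD
    set A := Bxy X x z with hA
    set C := Bxy X x y with hC
    set E := Bxy X y z with hE
    by_cases hAe : A = ∅
    · rw [hAe]
      simp only [Finset.sum_empty, mul_zero]
      exact add_nonneg
        (mul_nonneg (by positivity) (Finset.sum_nonneg fun s _ => bandDistS_nonneg s x y))
        (mul_nonneg (by positivity) (Finset.sum_nonneg fun s _ => bandDistS_nonneg s y z))
    have huA : (0:ℝ) < (A.card : ℝ) := by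
      have := Finset.card_pos.mpr (Finset.nonempty_of_ne_empty hAe)
      exact_mod_cast this
    have fact1 : C \ A = E \ A := by
      ext s
      simp only [hA, hC, hE, Bxy, Finset.mem_sdiff, Finset.mem_filter, ne_eq,
        Finset.union_eq_empty, not_and, not_not]
      tauto
    have fact2 : ∀ s ∈ C \ A, bandDistS s x y = 1 := by
      intro s hs
      rw [Finset.mem_sdiff] at hs
      obtain ⟨hsC, hsA⟩ := hs
      have hb : s ∈ bands X := (Finset.mem_filter.mp hsC).1
      have hU : timesInS s x ∪ timesInS s y ≠ ∅ := (Finset.mem_filter.mp hsC).2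
      have hxz : timesInS s x ∪ timesInS s z = ∅ := by
        by_contra hc
        exact hsA (Finset.mem_filter.mpr ⟨hb, hc⟩)
      have hTx : timesInS s x = ∅ := (Finset.union_eq_empty.mp hxz).1
      unfold bandDistS bandSimS
      rw [if_neg hU, hTx]
      simp
    have fact2' : ∀ s ∈ E \ A, bandDistS s y z = 1 := by
      intro s hs
      rw [Finset.mem_sdiff] at hs
      obtain ⟨hsE, hsA⟩ := hs
      have hb : s ∈ bands X := (Finset.mem_filter.mp hsE).1
      have hU : timesInS s y ∪ timesInS s z ≠ ∅ := (Finset.mem_filter.mp hsE).2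
      have hxz : timesInS s x ∪ timesInS s z = ∅ := by
        by_contra hc
        exact hsA (Finset.mem_filter.mpr ⟨hb, hc⟩)
      have hTz : timesInS s z = ∅ := (Finset.union_eq_empty.mp hxz).2
      unfold bandDistS bandSimS
      rw [if_neg hU, hTz]
      simp
    have fact3 : ∀ s ∈ A \ C, bandDistS s x y = 0 := by
      intro s hs
      rw [Finset.mem_sdiff] at hs
      have hU : timesInS s x ∪ timesInS s y = ∅ := by
        by_contra hc
        exact hs.2 (Finset.mem_filter.mpr ⟨(Finset.mem_filter.mp hs.1).1, hc⟩)
      unfold bandDistS bandSimS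
      rw [if_pos hU, sub_self]
    have fact3' : ∀ s ∈ A \ E, bandDistS s y z = 0 := by
      intro s hs
      rw [Finset.mem_sdiff] at hs
      have hU : timesInS s y ∪ timesInS s z = ∅ := by
        by_contra hc
        exact hs.2 (Finset.mem_filter.mpr ⟨(Finset.mem_filter.mp hs.1).1, hc⟩)
      unfold bandDistS bandSimS
      rw [if_pos hU, sub_self]
    set m := (((C \ A).card : ℕ) : ℝ) with hm
    have hCsum : ∑ s ∈ C, bandDistS s x y
        = (∑ s ∈ (C ∩ A), bandDistS s x y) + m := by
      rw [← Finset.sum_inter_add_sum_sdiff C A (fun s => bandDistS s x y)]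
      congr 1
      rw [Finset.sum_congr rfl fact2, Finset.sum_const, nsmul_eq_mul, mul_one]
    have hEsum : ∑ s ∈ E, bandDistS s y z
        = (∑ s ∈ (E ∩ A), bandDistS s y z) + m := by
      rw [← Finset.sum_inter_add_sum_sdiff E A (fun s => bandDistS s y z)]
      congr 1
      rw [Finset.sum_congr rfl fact2', Finset.sum_const, nsmul_eq_mul, mul_one, hm, ← fact1]
    have hAxy : ∑ s ∈ A, bandDistS s x y = ∑ s ∈ (C ∩ A), bandDistS s x y := by
      rw [← Finset.sum_inter_add_sum_sdiff A C (fun s => bandDistS s x y),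
        Finset.sum_eq_zero fact3, add_zero, Finset.inter_comm]
    have hAyz : ∑ s ∈ A, bandDistS s y z = ∑ s ∈ (E ∩ A), bandDistS s y z := by
      rw [← Finset.sum_inter_add_sum_sdiff A E (fun s => bandDistS s y z),
        Finset.sum_eq_zero fact3', add_zero, Finset.inter_comm]
    have htri : ∑ s ∈ A, bandDistS s x z
        ≤ (∑ s ∈ A, bandDistS s x y) + ∑ s ∈ A, bandDistS s y z := by
      rw [← Finset.sum_add_distrib]
      exact Finset.sum_le_sum fun s _ => bandDistS_triangle s x y z
    have h5 : (∑ s ∈ A, bandDistS s x z) + 2 * m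
        ≤ (∑ s ∈ C, bandDistS s x y) + ∑ s ∈ E, bandDistS s y z := by
      rw [hCsum, hEsum, ← hAxy, ← hAyz]
      linarith
    have hc6 : (C.card : ℝ) ≤ (A.card : ℝ) + m := by
      have h1 : C.card = (C ∩ A).card + (C \ A).card :=
        (Finset.card_inter_add_card_sdiff C A).symm
      have h2 : (C ∩ A).card ≤ A.card := Finset.card_le_card Finset.inter_subset_right
      rw [hm, h1]
      push_cast
      have : ((C ∩ A).card : ℝ) ≤ (A.card : ℝ) := by exact_mod_cast h2
      linarith
    have hc7 : (E.card : ℝ) ≤ (A.card : ℝ) + m := by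
      have h1 : E.card = (E ∩ A).card + (E \ A).card :=
        (Finset.card_inter_add_card_sdiff E A).symm
      have h2 : (E ∩ A).card ≤ A.card := Finset.card_le_card Finset.inter_subset_right
      rw [hm, fact1, h1]
      push_cast
      have : ((E ∩ A).card : ℝ) ≤ (A.card : ℝ) := by exact_mod_cast h2
      linarith
    have final := tri_core (∑ s ∈ A, bandDistS s x z) (A.card : ℝ)
      (∑ s ∈ C, bandDistS s x y) (C.card : ℝ)
      (∑ s ∈ E, bandDistS s y z) (E.card : ℝ) m huA
      (Finset.sum_nonneg fun s _ => bandDistS_nonneg s x y)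
      (Finset.sum_nonneg fun s _ => bandDistS_nonneg s y z)
      (by positivity)
      (hsum_le x z A) (hsum_le x y C) (hsum_le y z E) h5 hc6 hc7
    rw [one_div_mul_eq_div, one_div_mul_eq_div, one_div_mul_eq_div]
    exact final
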